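/- Let z_1,...,z_d be nonzero elements of a field and let 1 ≤ m ≤ d. For any integer n ≥ m: e_n(1/z_1,...,1/z_d) · ∏_{i=1}^m z_i = ∑_{i=0}^{m} e_i(z_1,...,z_m) · e_{n-m+i}(1/z_{m+1},...,1/z_d). -/

import Mathlib

/-- Elementary symmetric polynomial `e_k(t 0, ..., t (r-1))`. -/
def esymP {R : Type*} [CommRing R] {r : ℕ} (t : Fin r → R) (k : ℕ) : R :=
  ∑ s ∈ Finset.univ.powersetCard k, ∏ i ∈ s, t i

open Multiset

lemma my_esymm_zero {R : Type*} [CommRing R] (s : Multiset R) : s.esymm 0 = 1 := by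
  simp [Multiset.esymm, Multiset.powersetCard_zero_left]

lemma my_esymm_of_lt {R : Type*} [CommRing R] {s : Multiset R} {k : ℕ} (h : Multiset.card s < k) :
    s.esymm k = 0 := by
  simp [Multiset.esymm, Multiset.powersetCard_eq_empty k h]

lemma my_esymm_cons {R : Type*} [CommRing R] (a : R) (s : Multiset R) (k : ℕ) :
    (a ::ₘ s).esymm (k + 1) = s.esymm (k + 1) + a * s.esymm k := by
  rw [Multiset.esymm, Multiset.powersetCard_cons, Multiset.map_add, Multiset.sum_add,
    Multiset.map_map]
  have h2 : (map (prod ∘ cons a) (powersetCard k s)).sum = a * s.esymm k := by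
    rw [Multiset.esymm, ← Multiset.sum_map_mul_left]
    exact congrArg _ (Multiset.map_congr rfl fun t _ => by simp)
  rw [h2]
  rfl

lemma my_esymm_card {R : Type*} [CommRing R] (s : Multiset R) :
    s.esymm (Multiset.card s) = s.prod := by
  induction s using Multiset.induction with
  | empty => simp [my_esymm_zero]
  | cons a s ih =>
    rw [Multiset.card_cons, my_esymm_cons, ih, my_esymm_of_lt (Nat.lt_succ_self _),
      Multiset.prod_cons, zero_add]

lemma my_esymm_add {R : Type*} [CommRing R] (u v : Multiset R) :
    ∀ n : ℕ, (u + v).esymm n = ∑ k ∈ Finset.range (n + 1), u.esymm k * v.esymm (n - k) := by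
  induction u using Multiset.induction with
  | empty =>
    intro n
    rw [zero_add, Finset.sum_eq_single 0 (fun b _ hb => by
        rw [my_esymm_of_lt (by simpa using Nat.pos_of_ne_zero hb), zero_mul])
      (fun h => absurd (Finset.mem_range.2 (Nat.succ_pos n)) h)]
    simp [my_esymm_zero]
  | cons a u ih =>
    intro n
    cases n with
    | zero => simp [my_esymm_zero]
    | succ n =>
      rw [Multiset.cons_add, my_esymm_cons, ih, ih,
        Finset.sum_range_succ' (fun k => (a ::ₘ u).esymm k * v.esymm (n + 1 - k)),
        Finset.sum_range_succ' (fun k => u.esymm k * v.esymm (n + 1 - k))]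
      simp only [my_esymm_cons, my_esymm_zero, Nat.add_sub_add_right, Nat.sub_zero, one_mul,
        add_mul]
      rw [Finset.sum_add_distrib]
      simp only [mul_assoc, ← Finset.mul_sum]
      ring

lemma my_esymm_inv {F : Type*} [Field F] (s : Multiset F) (hs : ∀ a ∈ s, a ≠ 0) :
    ∀ k ≤ Multiset.card s, s.esymm k = (s.map Inv.inv).esymm (Multiset.card s - k) * s.prod := by
  induction s using Multiset.induction with
  | empty =>
    intro k hk
    simp only [Multiset.card_zero, Nat.le_zero] at hk
    subst hk
    simp [my_esymm_zero]
  | cons a s ih =>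
    intro k hk
    have ha : a ≠ 0 := hs a (Multiset.mem_cons_self a s)
    have hs' : ∀ b ∈ s, b ≠ 0 := fun b hb => hs b (Multiset.mem_cons_of_mem hb)
    have hps : s.prod ≠ 0 := Multiset.prod_ne_zero (fun h0 => hs' 0 h0 rfl)
    cases k with
    | zero =>
      rw [Multiset.map_cons, Multiset.card_cons, Multiset.prod_cons]
      have hcard : Multiset.card s + 1 - 0 = Multiset.card (a⁻¹ ::ₘ s.map Inv.inv) := by simp
      rw [my_esymm_zero, hcard, my_esymm_card, Multiset.prod_cons, Multiset.prod_map_inv']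
      field_simp
    | succ k =>
      rw [Multiset.card_cons] at hk
      have hk' : k ≤ Multiset.card s := by omega
      rcases eq_or_lt_of_le hk' with heq | hlt
      · rw [Multiset.map_cons, Multiset.card_cons, Multiset.prod_cons, my_esymm_cons,
          show Multiset.card s + 1 - (k + 1) = 0 from by omega, my_esymm_zero, one_mul,
          my_esymm_of_lt (show Multiset.card s < k + 1 from by omega), zero_add, heq,
          my_esymm_card]
      · rw [Multiset.map_cons, Multiset.card_cons, Multiset.prod_cons, my_esymm_cons,
          show Multiset.card s + 1 - (k + 1) = (Multiset.card s - (k + 1)) + 1 from by omega,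
          my_esymm_cons, ih hs' (k + 1) (by omega), ih hs' k hk',
          show Multiset.card s - k = Multiset.card s - (k + 1) + 1 from by omega]
        field_simp
        ring

lemma my_univ_map_split {α : Type*} {d : ℕ} (m : ℕ) (hmd : m ≤ d) (f : Fin d → α) :
    Multiset.map f Finset.univ.val
      = Multiset.map (fun j : Fin m => f (Fin.castLE hmd j)) Finset.univ.val
        + Multiset.map (fun j : Fin (d - m) => f ⟨m + j.1, by omega⟩) Finset.univ.val := by
  have hd : d = m + (d - m) := by omega
  simp only [Fin.univ_val_map]
  rw [List.ofFn_congr hd f, List.ofFn_add]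
  rw [← Multiset.coe_add]
  congr 1

lemma esymP_eq {R : Type*} [CommRing R] {r : ℕ} (t : Fin r → R) (k : ℕ) :
    esymP t k = (Finset.univ.val.map t).esymm k := by
  rw [esymP, Finset.esymm_map_val]


theorem esymm_inv_prod_large {F : Type*} [Field F] (d m n : ℕ) (hm : 1 ≤ m) (hmd : m ≤ d)
    (hn : m ≤ n) (z : Fin d → F) (hz : ∀ i, z i ≠ 0) :
    esymP (fun i => (z i)⁻¹) n * ∏ i : Fin m, z (Fin.castLE hmd i)
      = ∑ i ∈ Finset.range (m + 1),
          esymP (fun j : Fin m => z (Fin.castLE hmd j)) i *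
            esymP (fun j : Fin (d - m) => (z ⟨m + j.1, by omega⟩)⁻¹) (n - m + i) := by
  set S : Multiset F := Finset.univ.val.map (fun j : Fin m => z (Fin.castLE hmd j)) with hS
  set T : Multiset F :=
    Finset.univ.val.map (fun j : Fin (d - m) => (z ⟨m + j.1, by omega⟩)⁻¹) with hT
  have hcS : Multiset.card S = m := by simp [hS]
  have hSne : ∀ a ∈ S, a ≠ 0 := by
    intro a ha
    obtain ⟨i, -, rfl⟩ := Multiset.mem_map.1 ha
    exact hz _
  have hsplit : Finset.univ.val.map (fun i : Fin d => (z i)⁻¹) = S.map Inv.inv + T := by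
    rw [my_univ_map_split m hmd (fun i : Fin d => (z i)⁻¹), hS, hT, Multiset.map_map]
    rfl
  have hprod : (∏ i : Fin m, z (Fin.castLE hmd i)) = S.prod := rfl
  rw [esymP_eq, hsplit, hprod, my_esymm_add, Finset.sum_mul]
  -- now LHS : ∑ k in range (n+1), (S.map inv).esymm k * T.esymm (n-k) * S.prod
  rw [← Finset.sum_subset (Finset.range_subset_range.2 (by omega : m + 1 ≤ n + 1))
      (fun k _ hk => by
        rw [my_esymm_of_lt (show Multiset.card (S.map Inv.inv) < k from by
          rw [Multiset.card_map, hcS]; simpa using hk), zero_mul, zero_mul])]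
  -- now LHS : ∑ k in range (m+1), (S.map inv).esymm k * T.esymm (n-k) * S.prod
  rw [← Finset.sum_range_reflect (fun i => esymP (fun j : Fin m => z (Fin.castLE hmd j)) i *
      esymP (fun j : Fin (d - m) => (z ⟨m + j.1, by omega⟩)⁻¹) (n - m + i)) (m + 1)]
  apply Finset.sum_congr rfl
  intro k hk
  have hkm : k ≤ m := by simpa [Nat.lt_succ_iff] using hk
  simp only [Nat.add_sub_cancel]  -- m + 1 - 1 - k = m - k ?
  rw [esymP_eq, esymP_eq, ← hS, ← hT]
  have h1 : S.esymm (m - k) = (S.map Inv.inv).esymm k * S.prod := by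
    have := my_esymm_inv S hSne (m - k) (by omega)
    rwa [hcS, show m - (m - k) = k from by omega] at this
  rw [show n - m + (m - k) = n - k from by omega, h1]
  ring
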